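/- For an interval hypergraph 𝕀 on [n], the map π ↦ Or_π is a meet semilattice morphism from the weak order on permutations of [n] to the hypergraphic poset P_𝕀 — that is, for all permutations σ, τ and every permutation ρ that is a greatest lower bound of σ and τ in the weak order, the orientation Or_ρ is a greatest lower bound of Or_σ and Or_τ in P_𝕀 — if and only if 𝕀 is closed under initial subintervals, i.e., [i,k] ∈ 𝕀 implies [i,j] ∈ 𝕀 for all 1 ≤ i < j < k ≤ n. -/

import Mathlib

namespace IHL

/-- The hyperedges of a hypergraph, as a subtype. -/
abbrev Edge (𝕀 : Finset (Finset ℕ)) : Type := {H : Finset ℕ // H ∈ 𝕀}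

/-- `ℋ` is a hypergraph on `[n] = {1,…,n}`: hyperedges are nonempty subsets of `[n]`
and all singletons belong to `ℋ`. -/
def IsHypergraph (n : ℕ) (ℋ : Finset (Finset ℕ)) : Prop :=
  (∀ H ∈ ℋ, H.Nonempty ∧ H ⊆ Finset.Icc 1 n) ∧
    ∀ i, 1 ≤ i → i ≤ n → ({i} : Finset ℕ) ∈ ℋ

/-- `𝕀` is an interval hypergraph on `[n]`: hyperedges are intervals `[a,b] ⊆ [n]`
and all singletons belong to `𝕀`. -/
def IsIntervalHypergraph (n : ℕ) (𝕀 : Finset (Finset ℕ)) : Prop :=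
  (∀ H ∈ 𝕀, ∃ a b, 1 ≤ a ∧ a ≤ b ∧ b ≤ n ∧ H = Finset.Icc a b) ∧
    ∀ i, 1 ≤ i → i ≤ n → ({i} : Finset ℕ) ∈ 𝕀

/-- An orientation assigns to each hyperedge one of its elements. -/
def IsOrientation (𝕀 : Finset (Finset ℕ)) (O : Edge 𝕀 → ℕ) : Prop :=
  ∀ H : Edge 𝕀, O H ∈ H.1

/-- Acyclicity: there is no cyclic sequence `H_0, …, H_k` with `k ≥ 2`, `H_k = H_0`, and
`O (H (p+1)) ∈ H p \ {O (H p)}` for all `p < k`. -/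
def IsAcyclic (𝕀 : Finset (Finset ℕ)) (O : Edge 𝕀 → ℕ) : Prop :=
  ¬∃ (k : ℕ) (H : ℕ → Edge 𝕀), 2 ≤ k ∧ H k = H 0 ∧
    ∀ p < k, O (H (p + 1)) ∈ (H p).1 ∧ O (H (p + 1)) ≠ O (H p)

/-- An acyclic orientation, i.e. an element of the hypergraphic poset. -/
def AcycOr (𝕀 : Finset (Finset ℕ)) (O : Edge 𝕀 → ℕ) : Prop :=
  IsOrientation 𝕀 O ∧ IsAcyclic 𝕀 O

/-- Increasing flip from `O` to `O'` flipping `i` to `j`. -/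
def IsIncFlip (n : ℕ) (𝕀 : Finset (Finset ℕ)) (i j : ℕ) (O O' : Edge 𝕀 → ℕ) : Prop :=
  O ≠ O' ∧ 1 ≤ i ∧ i < j ∧ j ≤ n ∧
    ∀ H : Edge 𝕀,
      (O H ≠ O' H → O H = i ∧ O' H = j) ∧
      (i ∈ H.1 → j ∈ H.1 → (O H = i ↔ O' H = j))

/-- One increasing flip step between acyclic orientations. -/
def FlipStep (n : ℕ) (𝕀 : Finset (Finset ℕ)) (O O' : Edge 𝕀 → ℕ) : Prop :=
  AcycOr 𝕀 O ∧ AcycOr 𝕀 O' ∧ ∃ i j, IsIncFlip n 𝕀 i j O O'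

/-- The order of the hypergraphic poset `P_𝕀`: reflexive-transitive closure of
the increasing flip relation on acyclic orientations. -/
def leP (n : ℕ) (𝕀 : Finset (Finset ℕ)) : (Edge 𝕀 → ℕ) → (Edge 𝕀 → ℕ) → Prop :=
  Relation.ReflTransGen (FlipStep n 𝕀)

/-- Strict order of the hypergraphic poset. -/
def ltP (n : ℕ) (𝕀 : Finset (Finset ℕ)) (A B : Edge 𝕀 → ℕ) : Prop :=
  leP n 𝕀 A B ∧ A ≠ B

/-- `B` covers `A` in `P_𝕀`. -/
def CoversP (n : ℕ) (𝕀 : Finset (Finset ℕ)) (A B : Edge 𝕀 → ℕ) : Prop :=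
  ltP n 𝕀 A B ∧ ¬∃ C, AcycOr 𝕀 C ∧ ltP n 𝕀 A C ∧ ltP n 𝕀 C B

/-- `𝕀` is closed under intersection. -/
def ClosedUnderIntersection (𝕀 : Finset (Finset ℕ)) : Prop :=
  ∀ I ∈ 𝕀, ∀ J ∈ 𝕀, (I ∩ J).Nonempty → I ∩ J ∈ 𝕀

/-- `π` is a permutation of `[n]` (it fixes everything outside `[1,n]`). -/
def IsPermOn (n : ℕ) (π : Equiv.Perm ℕ) : Prop :=
  ∀ x, x ∉ Finset.Icc 1 n → π x = x

/-- The surjection `Or` from permutations to acyclic orientations: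
`Or_π (H) = π (min {p : π p ∈ H})`. -/
noncomputable def orMap (𝕀 : Finset (Finset ℕ)) (π : Equiv.Perm ℕ) : Edge 𝕀 → ℕ :=
  fun H => π (sInf {p | π p ∈ H.1})

/-- The weak order on permutations of `[n]`, via inclusion of inversion sets. -/
def weakLe (n : ℕ) (σ τ : Equiv.Perm ℕ) : Prop :=
  ∀ a b, 1 ≤ a → a < b → b ≤ n → σ.symm b < σ.symm a → τ.symm b < τ.symm a

/-- `π` contains the pattern 231. -/
def Contains231 (n : ℕ) (π : Equiv.Perm ℕ) : Prop :=
  ∃ p q r, 1 ≤ p ∧ p < q ∧ q < r ∧ r ≤ n ∧ π r < π p ∧ π p < π q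

/-- `π` contains the pattern 213. -/
def Contains213 (n : ℕ) (π : Equiv.Perm ℕ) : Prop :=
  ∃ p q r, 1 ≤ p ∧ p < q ∧ q < r ∧ r ≤ n ∧ π q < π p ∧ π p < π r

/-- The partial order `≺_A`: transitive closure of `A H ≺ h` for `h ∈ H \ {A H}`. -/
def prec (𝕀 : Finset (Finset ℕ)) (A : Edge 𝕀 → ℕ) : ℕ → ℕ → Prop :=
  Relation.TransGen fun a b => ∃ H : Edge 𝕀, A H = a ∧ b ∈ H.1 ∧ b ≠ a

/-- The distributivity condition on interval hypergraphs: for all `I, J ∈ 𝕀` with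
`I ⊈ J`, `J ⊈ I` and `I ∩ J ≠ ∅`, the intersection `I ∩ J` is in `𝕀` and is initial
or final in any `K ∈ 𝕀` containing it. -/
def IsDistribHG (𝕀 : Finset (Finset ℕ)) : Prop :=
  ∀ I ∈ 𝕀, ∀ J ∈ 𝕀, ¬I ⊆ J → ¬J ⊆ I → (I ∩ J).Nonempty →
    (I ∩ J ∈ 𝕀 ∧ ∀ K ∈ 𝕀, I ∩ J ⊆ K → ((I ∩ J).min = K.min ∨ (I ∩ J).max = K.max))

/-- `j ∈ 𝒥_𝕀 = ⋃_{I ∈ 𝕀} (I \ {min I})`. -/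
def InJI (𝕀 : Finset (Finset ℕ)) (j : ℕ) : Prop :=
  ∃ I ∈ 𝕀, j ∈ I ∧ ∃ y ∈ I, y < j

/-- `Jj` is the interval `J_j = ⋂ {I ∈ 𝕀 : j ∈ I \ {min I}}`. -/
def IsJj (𝕀 : Finset (Finset ℕ)) (j : ℕ) (Jj : Finset ℕ) : Prop :=
  ∀ x, x ∈ Jj ↔ ∀ I ∈ 𝕀, j ∈ I → (∃ y ∈ I, y < j) → x ∈ I

/-- `Aj` is the orientation `A_j` (where `μj = min J_j`):
`A_j (J) = j` if `j ∈ J` and `min J = μ_j`, and `A_j (J) = min J` otherwise. -/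
def IsAj (𝕀 : Finset (Finset ℕ)) (j μj : ℕ) (Aj : Edge 𝕀 → ℕ) : Prop :=
  ∀ J : Edge 𝕀,
    (j ∈ J.1 ∧ IsLeast (J.1 : Set ℕ) μj → Aj J = j) ∧
    (¬(j ∈ J.1 ∧ IsLeast (J.1 : Set ℕ) μj) → IsLeast (J.1 : Set ℕ) (Aj J))

/-- `Jij` is the interval `J_{ij} = ⋂ {I ∈ 𝕀 : {i,j} ⊆ I}`. -/
def IsJij (𝕀 : Finset (Finset ℕ)) (i j : ℕ) (Jij : Finset ℕ) : Prop :=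
  ∀ x, x ∈ Jij ↔ ∀ I ∈ 𝕀, i ∈ I → j ∈ I → x ∈ I

/-- `(i,j) ∈ ℐ𝒥_𝕀`, where `μij = min J_{ij}`: both lie in a common hyperedge and
`i = max ([μ_{ij}, j) \ ⋃ {J \ {min J} : J ∈ 𝕀, J ⊆ [μ_{ij}, j)})`. -/
def InIJ (n : ℕ) (𝕀 : Finset (Finset ℕ)) (i j μij : ℕ) : Prop :=
  1 ≤ i ∧ i < j ∧ j ≤ n ∧ (∃ I ∈ 𝕀, i ∈ I ∧ j ∈ I) ∧
    IsGreatest {m | μij ≤ m ∧ m < j ∧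
      ∀ J ∈ 𝕀, (∀ x ∈ J, μij ≤ x ∧ x < j) → m ∈ J → ∀ y ∈ J, m ≤ y} i

/-- `Aij` is the orientation `A_{ij}` (where `μij = min J_{ij}`):
`A_{ij} (J) = j` if `j ∈ J` and `min J ≥ μ_{ij}`, and `A_{ij} (J) = min J` otherwise. -/
def IsAij (𝕀 : Finset (Finset ℕ)) (j μij : ℕ) (Aij : Edge 𝕀 → ℕ) : Prop :=
  ∀ J : Edge 𝕀,
    (j ∈ J.1 ∧ (∀ x ∈ J.1, μij ≤ x) → Aij J = j) ∧
    (¬(j ∈ J.1 ∧ (∀ x ∈ J.1, μij ≤ x)) → IsLeast (J.1 : Set ℕ) (Aij J))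

/-- The reversal `x ↦ n - x + 1` on `[n]`. -/
def revPt (n x : ℕ) : ℕ := n - x + 1

/-- The reversed hypergraph `ℋ↔`. -/
def revHG (n : ℕ) (ℋ : Finset (Finset ℕ)) : Finset (Finset ℕ) :=
  ℋ.image fun H => H.image (revPt n)


/-! ### Auxiliary development -/

open Finset Relation

section Aux

variable {n : ℕ} {𝕀 : Finset (Finset ℕ)}

/-- One step of the precedence relation of an orientation. -/
def stepRel (𝕀 : Finset (Finset ℕ)) (A : Edge 𝕀 → ℕ) (a b : ℕ) : Prop :=
  ∃ H : Edge 𝕀, A H = a ∧ b ∈ H.1 ∧ b ≠ a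

lemma edge_interval (h𝕀 : IsIntervalHypergraph n 𝕀) (H : Edge 𝕀) :
    ∃ a b, 1 ≤ a ∧ a ≤ b ∧ b ≤ n ∧ H.1 = Finset.Icc a b :=
  h𝕀.1 H.1 H.2

lemma edge_nonempty (h𝕀 : IsIntervalHypergraph n 𝕀) (H : Edge 𝕀) : H.1.Nonempty := by
  obtain ⟨a, b, _, hab, _, hH⟩ := edge_interval h𝕀 H
  exact ⟨a, by simp [hH, hab]⟩

lemma edge_subset (h𝕀 : IsIntervalHypergraph n 𝕀) (H : Edge 𝕀) :
    H.1 ⊆ Finset.Icc 1 n := by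
  obtain ⟨a, b, ha, hab, hb, hH⟩ := edge_interval h𝕀 H
  rw [hH]
  exact Finset.Icc_subset_Icc ha hb

lemma edge_between (h𝕀 : IsIntervalHypergraph n 𝕀) (H : Edge 𝕀) {x y z : ℕ}
    (hx : x ∈ H.1) (hy : y ∈ H.1) (hxz : x ≤ z) (hzy : z ≤ y) : z ∈ H.1 := by
  obtain ⟨a, b, _, _, _, hH⟩ := edge_interval h𝕀 H
  rw [hH] at hx hy ⊢
  simp only [Finset.mem_Icc] at *
  omega

lemma orMap_mem (h𝕀 : IsIntervalHypergraph n 𝕀) (π : Equiv.Perm ℕ) (H : Edge 𝕀) :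
    orMap 𝕀 π H ∈ H.1 := by
  obtain ⟨y, hy⟩ := edge_nonempty h𝕀 H
  have hne : {p | π p ∈ H.1}.Nonempty := ⟨π.symm y, by simp [hy]⟩
  exact Nat.sInf_mem hne

lemma orMap_first (h𝕀 : IsIntervalHypergraph n 𝕀) (π : Equiv.Perm ℕ) (H : Edge 𝕀)
    {h : ℕ} (hh : h ∈ H.1) : π.symm (orMap 𝕀 π H) ≤ π.symm h := by
  have : π.symm h ∈ {p | π p ∈ H.1} := by simp [hh]
  have h2 : sInf {p | π p ∈ H.1} ≤ π.symm h := Nat.sInf_le this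
  simpa [orMap] using h2

lemma orMap_eq_of_first (h𝕀 : IsIntervalHypergraph n 𝕀) (π : Equiv.Perm ℕ) (H : Edge 𝕀)
    {y : ℕ} (hy : y ∈ H.1) (hfirst : ∀ h ∈ H.1, π.symm y ≤ π.symm h) :
    orMap 𝕀 π H = y := by
  have h1 : π.symm (orMap 𝕀 π H) ≤ π.symm y := orMap_first h𝕀 π H hy
  have h2 : π.symm y ≤ π.symm (orMap 𝕀 π H) := hfirst _ (orMap_mem h𝕀 π H)
  have := le_antisymm h1 h2
  have := π.symm.injective this
  exact this

/-- From a value-cycle for the one-step relation, the orientation is not acyclic. -/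
lemma not_isAcyclic_of_transGen {A : Edge 𝕀 → ℕ} {a : ℕ}
    (h : Relation.TransGen (stepRel 𝕀 A) a a) : ¬ IsAcyclic 𝕀 A := by
  -- extract a chain
  have key : ∀ b, Relation.TransGen (stepRel 𝕀 A) a b →
      ∃ k, 1 ≤ k ∧ ∃ f : ℕ → ℕ, f 0 = a ∧ f k = b ∧
        ∀ p < k, stepRel 𝕀 A (f p) (f (p + 1)) := by
    intro b hb
    induction hb with
    | @single c hstep =>
        refine ⟨1, le_refl _, fun p => if p = 0 then a else c, by simp, by simp, ?_⟩
        intro p hp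
        have : p = 0 := by omega
        subst this
        simpa using hstep
    | @tail c d _hab hstep ih =>
        obtain ⟨k, hk, f, hf0, hfk, hf⟩ := ih
        refine ⟨k + 1, by omega, fun p => if p = k + 1 then d else f p,
          by simp only [show ¬ (0 = k+1) by omega, if_false]; exact hf0, by simp, ?_⟩
        intro p hp
        rcases Nat.lt_or_ge p k with h1 | h1
        · have e1 : ¬ (p = k + 1) := by omega
          have e2 : ¬ (p + 1 = k + 1) := by omega
          simp only [e1, e2, if_false]
          exact hf p h1
        · have hpk : p = k := by omega
          subst hpk
          simp only [show ¬ (p = p + 1) by omega, if_false, if_pos rfl]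
          rw [hfk]
          exact hstep
  obtain ⟨k, hk1, f, hf0, hfk, hf⟩ := key a h
  -- k = 1 impossible
  have hk2 : 2 ≤ k := by
    rcases Nat.lt_or_ge k 2 with h1 | h1
    · exfalso
      have hk : k = 1 := by omega
      subst hk
      obtain ⟨H, hH1, hH2, hH3⟩ := hf 0 (by norm_num)
      exact hH3 (show f (0+1) = f 0 by rw [show (0:ℕ)+1 = 1 from rfl, hfk, hf0])
    · exact h1
  intro hacyc
  -- choose witnessing edges
  have hchoice : ∀ p, ∃ E : Edge 𝕀, p < k → (A E = f p ∧ f (p + 1) ∈ E.1 ∧ f (p+1) ≠ f p) := by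
    intro p
    by_cases hp : p < k
    · obtain ⟨E, hE⟩ := hf p hp
      exact ⟨E, fun _ => hE⟩
    · obtain ⟨E, hE⟩ := hf 0 (by omega)
      exact ⟨E, fun h => absurd h hp⟩
  choose E hE using hchoice
  apply hacyc
  refine ⟨k, fun p => if p < k then E p else E 0, hk2,
    by simp only [show ¬ (k < k) by omega, show (0:ℕ) < k by omega, if_false, if_true], ?_⟩
  intro p hp
  have hAeq : ∀ q, q ≤ k → A (if q < k then E q else E 0) = f q := by
    intro q hq
    rcases Nat.lt_or_ge q k with h1 | h1
    · simp only [if_pos h1]; exact (hE q h1).1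
    · have hqk : q = k := by omega
      simp only [hqk, show ¬ (k < k) by omega, if_false]
      rw [(hE 0 (by omega)).1, hf0, hfk]
  have h1 := hAeq (p+1) (by omega)
  have h2 := hAeq p (by omega)
  rw [h1, h2]
  simp only [if_pos hp]
  exact ⟨(hE p hp).2.1, (hE p hp).2.2⟩

lemma transGen_irrefl_of_acyclic {A : Edge 𝕀 → ℕ} (h : IsAcyclic 𝕀 A) (a : ℕ) :
    ¬ Relation.TransGen (stepRel 𝕀 A) a a := fun hc => not_isAcyclic_of_transGen hc h

/-- The orientation of a subedge containing `A H` equals `A H`. -/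
lemma subedge_eq {A : Edge 𝕀 → ℕ} (hA : IsAcyclic 𝕀 A) (K H : Edge 𝕀)
    (hKH : K.1 ⊆ H.1) (hin : A H ∈ K.1) (hAK : A K ∈ K.1) : A K = A H := by
  by_contra hne
  apply transGen_irrefl_of_acyclic hA (A H)
  have s1 : stepRel 𝕀 A (A H) (A K) := ⟨H, rfl, hKH hAK, hne⟩
  have s2 : stepRel 𝕀 A (A K) (A H) := ⟨K, rfl, hin, fun hc => hne hc.symm⟩
  exact Relation.TransGen.head s1 (Relation.TransGen.single s2)

/-- `Or_π` is an acyclic orientation. -/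
lemma acycOr_orMap (h𝕀 : IsIntervalHypergraph n 𝕀) (π : Equiv.Perm ℕ) :
    AcycOr 𝕀 (orMap 𝕀 π) := by
  refine ⟨fun H => orMap_mem h𝕀 π H, ?_⟩
  rintro ⟨k, H, hk2, hH0, hcond⟩
  set O := orMap 𝕀 π with hO
  have mono : ∀ p < k, π.symm (O (H p)) < π.symm (O (H (p+1))) := by
    intro p hp
    obtain ⟨hmem, hne⟩ := hcond p hp
    have h1 : π.symm (O (H p)) ≤ π.symm (O (H (p+1))) := orMap_first h𝕀 π (H p) hmem
    rcases lt_or_eq_of_le h1 with h | h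
    · exact h
    · exact absurd (π.symm.injective h) (fun hc => hne hc.symm)
  have chain : ∀ p ≤ k, 1 ≤ p → π.symm (O (H 0)) < π.symm (O (H p)) := by
    intro p
    induction p with
    | zero => omega
    | succ q ih =>
        intro hq _
        rcases Nat.lt_or_ge 0 q with h0 | h0
        · exact lt_trans (ih (by omega) (by omega)) (mono q (by omega))
        · have : q = 0 := by omega
          subst this
          exact mono 0 (by omega)
  have := chain k (le_refl k) (by omega)
  rw [hH0] at this
  exact lt_irrefl _ this

/-- Increasing flips only increase values; `leP` implies pointwise `≤`. -/
lemma leP_pointwise {A B : Edge 𝕀 → ℕ} (h : leP n 𝕀 A B) : ∀ H, A H ≤ B H := by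
  induction h with
  | refl => exact fun H => le_refl _
  | @tail B C _hst hstep ih =>
      intro H
      refine le_trans (ih H) ?_
      obtain ⟨_, _, i, j, hflip⟩ := hstep
      obtain ⟨_, hij, _, hcond⟩ := hflip.2
      rcases eq_or_ne (B H) (C H) with he | hne
      · exact le_of_eq he
      · obtain ⟨h1, h2⟩ := (hcond H).1 hne
        omega

/-- `Or` is pointwise monotone along the weak order. -/
lemma orMap_pointwise_mono (h𝕀 : IsIntervalHypergraph n 𝕀) {ρ σ : Equiv.Perm ℕ}
    (h : weakLe n ρ σ) (H : Edge 𝕀) : orMap 𝕀 ρ H ≤ orMap 𝕀 σ H := by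
  by_contra hc
  push_neg at hc
  set a := orMap 𝕀 ρ H
  set b := orMap 𝕀 σ H
  have ha : a ∈ H.1 := orMap_mem h𝕀 ρ H
  have hb : b ∈ H.1 := orMap_mem h𝕀 σ H
  have hbn := edge_subset h𝕀 H hb
  have han := edge_subset h𝕀 H ha
  simp only [Finset.mem_Icc] at hbn han
  have h1 : ρ.symm a ≤ ρ.symm b := orMap_first h𝕀 ρ H hb
  have h1' : ρ.symm a < ρ.symm b := by
    rcases lt_or_eq_of_le h1 with h | h
    · exact h
    · exact absurd (ρ.symm.injective h) (by omega)
  have h2 := h b a hbn.1 hc han.2 h1'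
  have h3 : σ.symm b ≤ σ.symm a := orMap_first h𝕀 σ H ha
  omega

lemma isPermOn_apply_mem {π : Equiv.Perm ℕ} (hπ : IsPermOn n π) {x : ℕ}
    (hx : x ∈ Finset.Icc 1 n) : π x ∈ Finset.Icc 1 n := by
  by_contra hc
  have := hπ _ hc
  have := π.injective this
  rw [← this] at hx
  exact hc hx

lemma isPermOn_symm {π : Equiv.Perm ℕ} (hπ : IsPermOn n π) : IsPermOn n π.symm := by
  intro x hx
  have hfix := hπ x hx
  have h2 : π.symm (π x) = π.symm x := by rw [hfix]
  rw [π.symm_apply_apply] at h2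
  exact h2.symm

lemma isPermOn_symm_mem {π : Equiv.Perm ℕ} (hπ : IsPermOn n π) {x : ℕ}
    (hx : x ∈ Finset.Icc 1 n) : π.symm x ∈ Finset.Icc 1 n :=
  isPermOn_apply_mem (isPermOn_symm hπ) hx

/-! #### Adjacent swaps and the order morphism property -/

/-- Description of `Or` after composing with an adjacent (in position) transposition. -/
lemma orMap_swap (h𝕀 : IsIntervalHypergraph n 𝕀) {ρ : Equiv.Perm ℕ} {a b q : ℕ}
    (hqa : ρ.symm a = q) (hqb : ρ.symm b = q + 1) (H : Edge 𝕀) :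
    orMap 𝕀 ((Equiv.swap q (q+1)).trans ρ) H =
      if a ∈ H.1 ∧ b ∈ H.1 ∧ orMap 𝕀 ρ H = a then b else orMap 𝕀 ρ H := by
  have hab : a ≠ b := fun h => by rw [h] at hqa; omega
  set π' := (Equiv.swap q (q+1)).trans ρ with hπ'
  have hsymm : ∀ x, π'.symm x = Equiv.swap q (q+1) (ρ.symm x) := by
    intro x
    simp [hπ', Equiv.symm_trans_apply]
  have posa : π'.symm a = q + 1 := by rw [hsymm, hqa, Equiv.swap_apply_left]
  have posb : π'.symm b = q := by rw [hsymm, hqb, Equiv.swap_apply_right]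
  have poso : ∀ x, x ≠ a → x ≠ b → π'.symm x = ρ.symm x := by
    intro x hxa hxb
    rw [hsymm]
    apply Equiv.swap_apply_of_ne_of_ne
    · intro hc; exact hxa (by rw [← hqa] at hc; exact ρ.symm.injective hc)
    · intro hc; exact hxb (by rw [← hqb] at hc; exact ρ.symm.injective hc)
  by_cases hc : a ∈ H.1 ∧ b ∈ H.1 ∧ orMap 𝕀 ρ H = a
  · rw [if_pos hc]
    obtain ⟨haH, hbH, hfa⟩ := hc
    apply orMap_eq_of_first h𝕀 _ _ hbH
    intro h hh
    have h1 : ρ.symm a ≤ ρ.symm h := by rw [← hfa]; exact orMap_first h𝕀 ρ H hh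
    rcases eq_or_ne h a with rfl | hha
    · omega
    rcases eq_or_ne h b with rfl | hhb
    · omega
    rw [posb, poso h hha hhb]
    omega
  · rw [if_neg hc]
    set w := orMap 𝕀 ρ H with hw
    have hwH : w ∈ H.1 := orMap_mem h𝕀 ρ H
    apply orMap_eq_of_first h𝕀 _ _ hwH
    intro h hh
    have h1 : ρ.symm w ≤ ρ.symm h := orMap_first h𝕀 ρ H hh
    rcases eq_or_ne w a with hwa | hwa
    · -- then b ∉ H
      have hbH : b ∉ H.1 := by
        intro hbH
        exact hc ⟨hwa ▸ hwH, hbH, hwa ▸ rfl⟩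
      rcases eq_or_ne h a with rfl | hha
      · rw [hwa]
      have hhb : h ≠ b := fun hc' => hbH (hc' ▸ hh)
      rw [hwa, posa, poso h hha hhb]
      have : ρ.symm a ≤ ρ.symm h := hwa ▸ h1
      have : ρ.symm h ≠ q := by
        intro hc'
        exact hha (ρ.symm.injective (by rw [hc', hqa]))
      omega
    rcases eq_or_ne w b with hwb | hwb
    · rw [hwb, posb]
      rcases eq_or_ne h a with rfl | hha
      · rw [posa]; omega
      rcases eq_or_ne h b with rfl | hhb
      · rw [posb]
      rw [poso h hha hhb]
      have h2 : ρ.symm b ≤ ρ.symm h := hwb ▸ h1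
      have h3 : ρ.symm h ≠ q := fun hc' => hha (ρ.symm.injective (by rw [hc', hqa]))
      omega
    · rw [poso w hwa hwb]
      have hwq : ρ.symm w ≠ q := fun hc' => hwa (ρ.symm.injective (by rw [hc', hqa]))
      have hwq1 : ρ.symm w ≠ q + 1 := fun hc' => hwb (ρ.symm.injective (by rw [hc', hqb]))
      rcases eq_or_ne h a with rfl | hha
      · rw [posa]; omega
      rcases eq_or_ne h b with rfl | hhb
      · rw [posb]; omega
      rw [poso h hha hhb]
      omega

/-- The inversion finset of a permutation, within `[1,n]`. -/
noncomputable def invF (n : ℕ) (π : Equiv.Perm ℕ) : Finset (ℕ × ℕ) :=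
  ((Finset.Icc 1 n) ×ˢ (Finset.Icc 1 n)).filter
    fun ab => ab.1 < ab.2 ∧ π.symm ab.2 < π.symm ab.1

lemma mem_invF {π : Equiv.Perm ℕ} {a b : ℕ} :
    (a, b) ∈ invF n π ↔ (1 ≤ a ∧ a ≤ n) ∧ (1 ≤ b ∧ b ≤ n) ∧ a < b ∧ π.symm b < π.symm a := by
  simp [invF, Finset.mem_filter, Finset.mem_product, Finset.mem_Icc]
  tauto

lemma weakLe_iff_invF_subset {π₁ π₂ : Equiv.Perm ℕ} :
    weakLe n π₁ π₂ ↔ invF n π₁ ⊆ invF n π₂ := by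
  constructor
  · intro h ab hab
    obtain ⟨a, b⟩ := ab
    rw [mem_invF] at hab ⊢
    exact ⟨hab.1, hab.2.1, hab.2.2.1, h a b hab.1.1 hab.2.2.1 hab.2.1.2 hab.2.2.2⟩
  · intro h a b ha hab hbn hinv
    have : (a, b) ∈ invF n π₁ := mem_invF.mpr ⟨⟨ha, by omega⟩, ⟨by omega, hbn⟩, hab, hinv⟩
    exact (mem_invF.mp (h this)).2.2.2

/-- Existence of an adjacent inversion pair. -/
lemma exists_adj_pair {ρ σ : Equiv.Perm ℕ} (hρ : IsPermOn n ρ) (hσ : IsPermOn n σ)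
    (hws : weakLe n ρ σ) :
    ∀ d a b, 1 ≤ a → a < b → b ≤ n → σ.symm b < σ.symm a → ρ.symm a < ρ.symm b →
    ρ.symm b - ρ.symm a ≤ d →
    ∃ a' b', 1 ≤ a' ∧ a' < b' ∧ b' ≤ n ∧ σ.symm b' < σ.symm a' ∧ ρ.symm b' = ρ.symm a' + 1 := by
  intro d
  induction d with
  | zero => intro a b _ _ _ _ _ _; omega
  | succ d ih =>
    intro a b ha hab hbn hσinv hρpos hd
    rcases eq_or_ne (ρ.symm b) (ρ.symm a + 1) with hadj | hne
    · exact ⟨a, b, ha, hab, hbn, hσinv, hadj⟩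
    set q := ρ.symm a with hq
    set m := ρ (q + 1) with hm
    have hmpos : ρ.symm m = q + 1 := by rw [hm, ρ.symm_apply_apply]
    have haIcc : a ∈ Finset.Icc 1 n := by
      simp only [Finset.mem_Icc]; omega
    have hbIcc : b ∈ Finset.Icc 1 n := by
      simp only [Finset.mem_Icc]; omega
    have hqIcc : q ∈ Finset.Icc 1 n := hq ▸ isPermOn_symm_mem hρ haIcc
    have hq1Icc : (q + 1) ∈ Finset.Icc 1 n := by
      have hbI := isPermOn_symm_mem hρ hbIcc
      simp only [Finset.mem_Icc] at *
      omega
    have hmIcc : m ∈ Finset.Icc 1 n := hm ▸ isPermOn_apply_mem hρ hq1Icc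
    simp only [Finset.mem_Icc] at hmIcc haIcc hbIcc
    have hma : m ≠ a := fun h => by rw [h] at hmpos; omega
    have hmb : m ≠ b := fun h => by rw [h] at hmpos; omega
    rcases Nat.lt_or_ge a m with ham | ham
    · rcases Nat.lt_or_ge (σ.symm m) (σ.symm a) with h1 | h1
      · exact ⟨a, m, ha, ham, hmIcc.2, h1, hmpos⟩
      · have h1' : σ.symm a < σ.symm m := by
          rcases lt_or_eq_of_le h1 with h | h
          · exact h
          · exact ((hma (σ.symm.injective h.symm)).elim)
        rcases Nat.lt_or_ge m b with hmb' | hmb'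
        · -- recurse on (m, b)
          exact ih m b (by omega) hmb' hbn (by omega) (by omega) (by omega)
        · -- m > b : contradiction
          have hbm : b < m := by omega
          have : ρ.symm m < ρ.symm b := by omega
          have := hws b m (by omega) hbm hmIcc.2 this
          omega
    · have hma' : m < a := by omega
      have hρinv : ρ.symm a < ρ.symm m := by omega
      have hσma := hws m a hmIcc.1 hma' (by omega) hρinv
      -- pair (m, b)
      exact ih m b hmIcc.1 (by omega) hbn (by omega) (by omega) (by omega)

lemma invF_swap {ρ : Equiv.Perm ℕ} {a b : ℕ}
    (ha : 1 ≤ a) (hab : a < b) (hbn : b ≤ n) (hadj : ρ.symm b = ρ.symm a + 1) :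
    invF n ((Equiv.swap (ρ.symm a) (ρ.symm a + 1)).trans ρ) = insert (a, b) (invF n ρ) := by
  set π' := (Equiv.swap (ρ.symm a) (ρ.symm a + 1)).trans ρ with hπ'
  have hsymm : ∀ x, π'.symm x = Equiv.swap (ρ.symm a) (ρ.symm a + 1) (ρ.symm x) := by
    intro x; simp [hπ', Equiv.symm_trans_apply]
  have posa : π'.symm a = ρ.symm a + 1 := by rw [hsymm, Equiv.swap_apply_left]
  have posb : π'.symm b = ρ.symm a := by rw [hsymm, hadj, Equiv.swap_apply_right]
  have poso : ∀ x, x ≠ a → x ≠ b → π'.symm x = ρ.symm x ∧ ρ.symm x ≠ ρ.symm a ∧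
      ρ.symm x ≠ ρ.symm a + 1 := by
    intro x hxa hxb
    have h1 : ρ.symm x ≠ ρ.symm a := fun hc => hxa (ρ.symm.injective hc)
    have h2 : ρ.symm x ≠ ρ.symm a + 1 := fun hc => hxb (ρ.symm.injective (hc.trans hadj.symm))
    exact ⟨by rw [hsymm]; exact Equiv.swap_apply_of_ne_of_ne h1 h2, h1, h2⟩
  ext ⟨x, y⟩
  simp only [Finset.mem_insert, mem_invF, Prod.mk.injEq]
  constructor
  · rintro ⟨hx, hy, hxy, hyx⟩
    rcases eq_or_ne x a with hxa | hxa
    · rcases eq_or_ne y b with hyb | hyb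
      · exact Or.inl ⟨hxa, hyb⟩
      · right
        refine ⟨hx, hy, hxy, ?_⟩
        subst hxa
        have hya : y ≠ x := by omega
        obtain ⟨e1, e2, e3⟩ := poso y hya hyb
        rw [posa, e1] at hyx
        omega
    · rcases eq_or_ne x b with hxb | hxb
      · right
        refine ⟨hx, hy, hxy, ?_⟩
        subst hxb
        have hyb : y ≠ x := by omega
        rcases eq_or_ne y a with hya | hya
        · omega
        · obtain ⟨e1, e2, e3⟩ := poso y hya hyb
          rw [posb, e1] at hyx
          omega
      · right
        refine ⟨hx, hy, hxy, ?_⟩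
        obtain ⟨f1, f2, f3⟩ := poso x hxa hxb
        rw [f1] at hyx
        rcases eq_or_ne y a with hya | hya
        · subst hya; rw [posa] at hyx; omega
        rcases eq_or_ne y b with hyb | hyb
        · subst hyb; rw [posb] at hyx; omega
        · obtain ⟨e1, e2, e3⟩ := poso y hya hyb
          rw [e1] at hyx
          omega
  · rintro (⟨hxa, hyb⟩ | ⟨hx, hy, hxy, hyx⟩)
    · subst hxa; subst hyb
      exact ⟨⟨ha, by omega⟩, ⟨by omega, hbn⟩, hab, by rw [posa, posb]; omega⟩
    · refine ⟨hx, hy, hxy, ?_⟩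
      rcases eq_or_ne x a with hxa | hxa
      · subst hxa
        rcases eq_or_ne y b with hyb | hyb
        · subst hyb; omega
        · have hya : y ≠ x := by omega
          obtain ⟨e1, e2, e3⟩ := poso y hya hyb
          rw [posa, e1]
          omega
      rcases eq_or_ne x b with hxb | hxb
      · subst hxb
        have hyb : y ≠ x := by omega
        rcases eq_or_ne y a with hya | hya
        · omega
        · obtain ⟨e1, e2, e3⟩ := poso y hya hyb
          rw [posb, e1]
          rw [hadj] at hyx
          omega
      · obtain ⟨f1, f2, f3⟩ := poso x hxa hxb
        rw [f1]
        rcases eq_or_ne y a with hya | hya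
        · subst hya; rw [posa]; omega
        rcases eq_or_ne y b with hyb | hyb
        · subst hyb; rw [posb]; rw [hadj] at hyx; omega
        · obtain ⟨e1, e2, e3⟩ := poso y hya hyb
          rw [e1]
          omega

lemma isPermOn_swap {ρ : Equiv.Perm ℕ} (hρ : IsPermOn n ρ) {q : ℕ}
    (hq : q ∈ Finset.Icc 1 n) (hq1 : q + 1 ∈ Finset.Icc 1 n) :
    IsPermOn n ((Equiv.swap q (q+1)).trans ρ) := by
  intro x hx
  have h1 : x ≠ q := fun h => hx (h ▸ hq)
  have h2 : x ≠ q + 1 := fun h => hx (h ▸ hq1)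
  simp only [Equiv.trans_apply, Equiv.swap_apply_of_ne_of_ne h1 h2]
  exact hρ x hx

lemma orMap_eq_of_weakLe_both (h𝕀 : IsIntervalHypergraph n 𝕀) {ρ σ : Equiv.Perm ℕ}
    (h1 : weakLe n ρ σ) (h2 : weakLe n σ ρ) : orMap 𝕀 ρ = orMap 𝕀 σ := by
  funext H
  by_contra hne
  set w := orMap 𝕀 ρ H with hw
  set v := orMap 𝕀 σ H with hv
  have hwH : w ∈ H.1 := orMap_mem h𝕀 ρ H
  have hvH : v ∈ H.1 := orMap_mem h𝕀 σ H
  have hwI := edge_subset h𝕀 H hwH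
  have hvI := edge_subset h𝕀 H hvH
  simp only [Finset.mem_Icc] at hwI hvI
  have hρwv : ρ.symm w ≤ ρ.symm v := orMap_first h𝕀 ρ H hvH
  have hσvw : σ.symm v ≤ σ.symm w := orMap_first h𝕀 σ H hwH
  have hρwv' : ρ.symm w < ρ.symm v := by
    rcases lt_or_eq_of_le hρwv with h | h
    · exact h
    · exact (hne (ρ.symm.injective h)).elim
  have hσvw' : σ.symm v < σ.symm w := by
    rcases lt_or_eq_of_le hσvw with h | h
    · exact h
    · exact (hne (σ.symm.injective h.symm)).elim
  rcases Nat.lt_or_ge w v with hlt | hge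
  · have := h2 w v hwI.1 hlt hvI.2 hσvw'
    omega
  · have hvw : v < w := by omega
    have := h1 v w hvI.1 hvw hwI.2 hρwv'
    omega

/-- Main chain lemma: the weak order maps to the flip order. -/
lemma weakLe_leP (h𝕀 : IsIntervalHypergraph n 𝕀) {ρ σ : Equiv.Perm ℕ}
    (hρ : IsPermOn n ρ) (hσ : IsPermOn n σ) (hws : weakLe n ρ σ) :
    leP n 𝕀 (orMap 𝕀 ρ) (orMap 𝕀 σ) := by
  suffices key : ∀ m (ρ : Equiv.Perm ℕ), IsPermOn n ρ → weakLe n ρ σ →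
      ((invF n σ) \ (invF n ρ)).card ≤ m → leP n 𝕀 (orMap 𝕀 ρ) (orMap 𝕀 σ) from
    key _ ρ hρ hws le_rfl
  intro m
  induction m with
  | zero =>
      intro ρ hρ hws hcard
      have hsub : invF n σ ⊆ invF n ρ := by
        rw [← Finset.sdiff_eq_empty_iff_subset]
        exact Finset.card_eq_zero.mp (by omega)
      rw [orMap_eq_of_weakLe_both h𝕀 hws (weakLe_iff_invF_subset.mpr hsub)]
      exact Relation.ReflTransGen.refl
  | succ m ih =>
      intro ρ hρ hws hcard
      by_cases hsub : invF n σ ⊆ invF n ρ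
      · rw [orMap_eq_of_weakLe_both h𝕀 hws (weakLe_iff_invF_subset.mpr hsub)]
        exact Relation.ReflTransGen.refl
      · obtain ⟨ab, hab0⟩ := Finset.not_subset.mp hsub
        obtain ⟨a₀, b₀⟩ := ab
        obtain ⟨habσ, habρ⟩ := hab0
        rw [mem_invF] at habσ
        obtain ⟨⟨ha0, han⟩, ⟨hb0, hbn0⟩, hab0', hσ0⟩ := habσ
        have hρpos : ρ.symm a₀ < ρ.symm b₀ := by
          have h1 : ¬ (ρ.symm b₀ < ρ.symm a₀) := by
            intro hc
            exact habρ (mem_invF.mpr ⟨⟨ha0, han⟩, ⟨hb0, hbn0⟩, hab0', hc⟩)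
          have h2 : ρ.symm a₀ ≠ ρ.symm b₀ := fun hc => by
            have := ρ.symm.injective hc; omega
          omega
        obtain ⟨a, b, ha, hab, hbn, hσinv, hadj⟩ :=
          exists_adj_pair hρ hσ hws (ρ.symm b₀ - ρ.symm a₀) a₀ b₀ ha0 hab0' hbn0 hσ0
            hρpos le_rfl
        set ρ' := (Equiv.swap (ρ.symm a) (ρ.symm a + 1)).trans ρ with hρ'def
        have haIcc : a ∈ Finset.Icc 1 n := by simp only [Finset.mem_Icc]; omega
        have hbIcc : b ∈ Finset.Icc 1 n := by simp only [Finset.mem_Icc]; omega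
        have hinv : invF n ρ' = insert (a, b) (invF n ρ) := invF_swap ha hab hbn hadj
        have hρ'perm : IsPermOn n ρ' := by
          apply isPermOn_swap hρ (isPermOn_symm_mem hρ haIcc)
          rw [← hadj]
          exact isPermOn_symm_mem hρ hbIcc
        have habρ' : (a, b) ∉ invF n ρ := by
          intro hc
          rw [mem_invF] at hc
          omega
        have habσ' : (a, b) ∈ invF n σ := mem_invF.mpr ⟨⟨ha, by omega⟩, ⟨by omega, hbn⟩, hab, hσinv⟩
        have hws' : weakLe n ρ' σ := by
          rw [weakLe_iff_invF_subset, hinv]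
          exact Finset.insert_subset habσ' (weakLe_iff_invF_subset.mp hws)
        have hcard' : ((invF n σ) \ (invF n ρ')).card ≤ m := by
          rw [hinv, Finset.sdiff_insert]
          have hmem : (a, b) ∈ (invF n σ) \ (invF n ρ) := Finset.mem_sdiff.mpr ⟨habσ', habρ'⟩
          have h1 := Finset.card_erase_of_mem hmem
          have h2 : 1 ≤ ((invF n σ) \ (invF n ρ)).card := Finset.card_pos.mpr ⟨_, hmem⟩
          omega
        have htail := ih ρ' hρ'perm hws' hcard'
        have hdesc : ∀ H : Edge 𝕀, orMap 𝕀 ρ' H =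
            if a ∈ H.1 ∧ b ∈ H.1 ∧ orMap 𝕀 ρ H = a then b else orMap 𝕀 ρ H :=
          fun H => orMap_swap h𝕀 rfl hadj H
        by_cases heq : orMap 𝕀 ρ' = orMap 𝕀 ρ
        · rw [← heq]; exact htail
        · refine Relation.ReflTransGen.trans (Relation.ReflTransGen.single ?_) htail
          refine ⟨acycOr_orMap h𝕀 ρ, acycOr_orMap h𝕀 ρ', a, b, fun h => heq h.symm,
            ha, hab, hbn, ?_⟩
          intro H
          constructor
          · intro hne
            by_cases hc : a ∈ H.1 ∧ b ∈ H.1 ∧ orMap 𝕀 ρ H = a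
            · rw [hdesc H, if_pos hc]
              exact ⟨hc.2.2, rfl⟩
            · rw [hdesc H, if_neg hc] at hne
              exact (hne rfl).elim
          · intro haH hbH
            constructor
            · intro hOa
              rw [hdesc H, if_pos ⟨haH, hbH, hOa⟩]
            · intro hO'b
              by_contra hOa
              rw [hdesc H, if_neg (fun hc => hOa hc.2.2)] at hO'b
              have h1 : ρ.symm (orMap 𝕀 ρ H) ≤ ρ.symm a := orMap_first h𝕀 ρ H haH
              rw [hO'b, hadj] at h1
              omega

/-! #### Explicit permutations for the forward direction -/

/-- `σ = (1,…,i-1, j, i, i+1, …, j-1, j+1, …)` as position-to-value. -/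
def sigmaF (i j : ℕ) : ℕ → ℕ := fun p =>
  if p < i ∨ j < p then p else if p = i then j else p - 1

def sigmaG (i j : ℕ) : ℕ → ℕ := fun v =>
  if v < i ∨ j < v then v else if v = j then i else v + 1

/-- `τ = (1,…,i-1, j+1, i, j, i+1, …, j-1, j+2, …)` as position-to-value. -/
def tauF (i j : ℕ) : ℕ → ℕ := fun p =>
  if p < i ∨ j + 1 < p then p
  else if p = i then j + 1 else if p = i + 1 then i else if p = i + 2 then j else p - 2

def tauG (i j : ℕ) : ℕ → ℕ := fun v =>
  if v < i ∨ j + 1 < v then v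
  else if v = j + 1 then i else if v = i then i + 1 else if v = j then i + 2 else v + 2

/-- `ρ = (1,…,i, j, i+1, …, j-1, j+1, …)` as position-to-value. -/
def rhoF (i j : ℕ) : ℕ → ℕ := fun p =>
  if p ≤ i ∨ j < p then p else if p = i + 1 then j else p - 1

def rhoG (i j : ℕ) : ℕ → ℕ := fun v =>
  if v ≤ i ∨ j < v then v else if v = j then i + 1 else v + 1

def sigmaP (i j : ℕ) (hij : i < j) : Equiv.Perm ℕ where
  toFun := sigmaF i j
  invFun := sigmaG i j
  left_inv := by intro p; simp only [sigmaF, sigmaG]; split_ifs <;> omega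
  right_inv := by intro v; simp only [sigmaF, sigmaG]; split_ifs <;> omega

def tauP (i j : ℕ) (hij : i < j) : Equiv.Perm ℕ where
  toFun := tauF i j
  invFun := tauG i j
  left_inv := by intro p; simp only [tauF, tauG]; split_ifs <;> omega
  right_inv := by intro v; simp only [tauF, tauG]; split_ifs <;> omega

def rhoP (i j : ℕ) (hij : i < j) : Equiv.Perm ℕ where
  toFun := rhoF i j
  invFun := rhoG i j
  left_inv := by intro p; simp only [rhoF, rhoG]; split_ifs <;> omega
  right_inv := by intro v; simp only [rhoF, rhoG]; split_ifs <;> omega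

lemma sigmaP_symm (i j : ℕ) (hij : i < j) (v : ℕ) :
    (sigmaP i j hij).symm v = sigmaG i j v := rfl
lemma tauP_symm (i j : ℕ) (hij : i < j) (v : ℕ) :
    (tauP i j hij).symm v = tauG i j v := rfl
lemma rhoP_symm (i j : ℕ) (hij : i < j) (v : ℕ) :
    (rhoP i j hij).symm v = rhoG i j v := rfl

section Forward

variable {i j : ℕ}

lemma sigmaP_permOn (hi : 1 ≤ i) (hij : i < j) (hjn : j + 1 ≤ n) : IsPermOn n (sigmaP i j hij) := by
  intro x hx
  simp only [Finset.mem_Icc, not_and_or, not_le] at hx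
  show sigmaF i j x = x
  simp only [sigmaF]
  split_ifs <;> omega

lemma tauP_permOn (hi : 1 ≤ i) (hij : i < j) (hjn : j + 1 ≤ n) : IsPermOn n (tauP i j hij) := by
  intro x hx
  simp only [Finset.mem_Icc, not_and_or, not_le] at hx
  show tauF i j x = x
  simp only [tauF]
  split_ifs <;> omega

lemma rhoP_permOn (hi : 1 ≤ i) (hij : i < j) (hjn : j + 1 ≤ n) : IsPermOn n (rhoP i j hij) := by
  intro x hx
  simp only [Finset.mem_Icc, not_and_or, not_le] at hx
  show rhoF i j x = x
  simp only [rhoF]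
  split_ifs <;> omega

lemma weakLe_rho_sigma (hij : i < j) : weakLe n (rhoP i j hij) (sigmaP i j hij) := by
  intro a b ha hab hbn hinv
  simp only [rhoP_symm] at hinv
  simp only [sigmaP_symm]
  simp only [rhoG] at hinv
  simp only [sigmaG]
  split_ifs at hinv ⊢ <;> omega

lemma weakLe_rho_tau (hij : i < j) : weakLe n (rhoP i j hij) (tauP i j hij) := by
  intro a b ha hab hbn hinv
  simp only [rhoP_symm] at hinv
  simp only [tauP_symm]
  simp only [rhoG] at hinv
  simp only [tauG]
  split_ifs at hinv ⊢ <;> omega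

lemma rho_glb (hij : i < j) {ρ' : Equiv.Perm ℕ} (h1 : weakLe n ρ' (sigmaP i j hij))
    (h2 : weakLe n ρ' (tauP i j hij)) : weakLe n ρ' (rhoP i j hij) := by
  intro a b ha hab hbn hinv
  have hσ := h1 a b ha hab hbn hinv
  have hτ := h2 a b ha hab hbn hinv
  simp only [sigmaP_symm] at hσ
  simp only [tauP_symm] at hτ
  simp only [rhoP_symm]
  have hbj : b = j ∧ i ≤ a := by
    simp only [sigmaG] at hσ
    split_ifs at hσ <;> omega
  obtain ⟨hbj, hia⟩ := hbj
  subst hbj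
  have hia' : i < a := by
    simp only [tauG] at hτ
    split_ifs at hτ <;> omega
  simp only [rhoG]
  split_ifs <;> omega

lemma orMap_sigmaP (h𝕀 : IsIntervalHypergraph n 𝕀) (hi : 1 ≤ i) (hij : i < j)
    (H : Edge 𝕀) (a b : ℕ) (hH : H.1 = Finset.Icc a b) (hab : a ≤ b) :
    orMap 𝕀 (sigmaP i j hij) H = if i ≤ a ∧ a ≤ j ∧ j ≤ b then j else a := by
  split_ifs with hc
  · apply orMap_eq_of_first h𝕀 _ _ (by rw [hH]; simp only [Finset.mem_Icc]; omega)
    intro h hh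
    rw [hH, Finset.mem_Icc] at hh
    simp only [sigmaP_symm, sigmaG]
    split_ifs <;> omega
  · apply orMap_eq_of_first h𝕀 _ _ (by rw [hH]; simp only [Finset.mem_Icc]; omega)
    intro h hh
    rw [hH, Finset.mem_Icc] at hh
    simp only [sigmaP_symm, sigmaG]
    split_ifs <;> omega

lemma orMap_tauP (h𝕀 : IsIntervalHypergraph n 𝕀) (hi : 1 ≤ i) (hij : i < j)
    (hnot : Finset.Icc i j ∉ 𝕀)
    (H : Edge 𝕀) (a b : ℕ) (hH : H.1 = Finset.Icc a b) (hab : a ≤ b) :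
    orMap 𝕀 (tauP i j hij) H =
      if i ≤ a ∧ a ≤ j + 1 ∧ j + 1 ≤ b then j + 1
      else if i ≤ a ∧ a ≤ j ∧ j ≤ b then j else a := by
  have hne : ¬ (a = i ∧ b = j) := by
    rintro ⟨rfl, rfl⟩
    exact hnot (hH ▸ H.2)
  split_ifs with hc1 hc2
  · apply orMap_eq_of_first h𝕀 _ _ (by rw [hH]; simp only [Finset.mem_Icc]; omega)
    intro h hh
    rw [hH, Finset.mem_Icc] at hh
    simp only [tauP_symm, tauG]
    split_ifs <;> omega
  · apply orMap_eq_of_first h𝕀 _ _ (by rw [hH]; simp only [Finset.mem_Icc]; omega)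
    intro h hh
    rw [hH, Finset.mem_Icc] at hh
    simp only [tauP_symm, tauG]
    split_ifs <;> omega
  · apply orMap_eq_of_first h𝕀 _ _ (by rw [hH]; simp only [Finset.mem_Icc]; omega)
    intro h hh
    rw [hH, Finset.mem_Icc] at hh
    simp only [tauP_symm, tauG]
    split_ifs <;> omega

lemma flip_sigma_tau (h𝕀 : IsIntervalHypergraph n 𝕀) (hi : 1 ≤ i) (hij : i < j)
    (hjn : j + 1 ≤ n) (hE : Finset.Icc i (j+1) ∈ 𝕀) (hnot : Finset.Icc i j ∉ 𝕀) :
    FlipStep n 𝕀 (orMap 𝕀 (sigmaP i j hij)) (orMap 𝕀 (tauP i j hij)) := by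
  have hformS : ∀ (H : Edge 𝕀) a b, H.1 = Finset.Icc a b → a ≤ b →
      orMap 𝕀 (sigmaP i j hij) H = if i ≤ a ∧ a ≤ j ∧ j ≤ b then j else a :=
    fun H a b hH hab => orMap_sigmaP h𝕀 hi hij H a b hH hab
  have hformT := fun (H : Edge 𝕀) a b hH hab => orMap_tauP h𝕀 hi hij hnot H a b hH hab
  have hEform : orMap 𝕀 (sigmaP i j hij) ⟨_, hE⟩ = j := by
    rw [hformS ⟨_, hE⟩ i (j+1) rfl (by omega)]
    simp only [if_pos (by omega : i ≤ i ∧ i ≤ j ∧ j ≤ j + 1)]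
  have hEformT : orMap 𝕀 (tauP i j hij) ⟨_, hE⟩ = j + 1 := by
    rw [hformT ⟨_, hE⟩ i (j+1) rfl (by omega)]
    simp only [if_pos (by omega : i ≤ i ∧ i ≤ j + 1 ∧ j + 1 ≤ j + 1)]
  refine ⟨acycOr_orMap h𝕀 _, acycOr_orMap h𝕀 _, j, j + 1, ?_, by omega, by omega, hjn, ?_⟩
  · intro hc
    have := congrFun hc ⟨_, hE⟩
    rw [hEform, hEformT] at this
    omega
  · intro H
    obtain ⟨a, b, ha1, hab, hbn, hH⟩ := edge_interval h𝕀 H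
    have hS := hformS H a b hH hab
    have hT := hformT H a b hH hab
    constructor
    · intro hne
      rw [hS, hT] at hne ⊢
      split_ifs at hne ⊢ <;>
        first
          | omega
          | exact ⟨rfl, rfl⟩
          | exact (hne rfl).elim
    · intro hjH hj1H
      rw [hH, Finset.mem_Icc] at hjH hj1H
      rw [hS, hT]
      split_ifs <;> omega

/-- The forward direction of the main theorem. -/
lemma forward_dir (h𝕀 : IsIntervalHypergraph n 𝕀)
    (hmorph : ∀ σ τ ρ : Equiv.Perm ℕ, IsPermOn n σ → IsPermOn n τ → IsPermOn n ρ →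
      (weakLe n ρ σ ∧ weakLe n ρ τ ∧
        ∀ ρ', IsPermOn n ρ' → weakLe n ρ' σ → weakLe n ρ' τ → weakLe n ρ' ρ) →
      (leP n 𝕀 (orMap 𝕀 ρ) (orMap 𝕀 σ) ∧ leP n 𝕀 (orMap 𝕀 ρ) (orMap 𝕀 τ) ∧
        ∀ C, AcycOr 𝕀 C → leP n 𝕀 C (orMap 𝕀 σ) → leP n 𝕀 C (orMap 𝕀 τ) →
          leP n 𝕀 C (orMap 𝕀 ρ))) :
    ∀ i j k, 1 ≤ i → i < j → j < k → k ≤ n →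
      Finset.Icc i k ∈ 𝕀 → Finset.Icc i j ∈ 𝕀 := by
  intro i j₀ k hi hij₀ hj₀k hkn hik
  by_contra hnot₀
  -- reduce to a "consecutive" violation
  set T := {m | j₀ ≤ m ∧ Finset.Icc i (m+1) ∈ 𝕀} with hT
  have hTne : T.Nonempty := ⟨k - 1, by
    constructor
    · omega
    · have : k - 1 + 1 = k := by omega
      rw [this]; exact hik⟩
  set j := sInf T with hj
  have hjT : j ∈ T := Nat.sInf_mem hTne
  have hij : i < j := by
    have := hjT.1; omega
  have hjn : j + 1 ≤ n := by
    -- j ≤ k - 1 since k - 1 ∈ T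
    have hle : j ≤ k - 1 := Nat.sInf_le ⟨by omega, by
      have : k - 1 + 1 = k := by omega
      rw [this]; exact hik⟩
    omega
  have hEj : Finset.Icc i (j+1) ∈ 𝕀 := hjT.2
  have hnot : Finset.Icc i j ∉ 𝕀 := by
    intro hmem
    rcases eq_or_ne j j₀ with heq | hne
    · rw [heq] at hmem; exact hnot₀ hmem
    · have hj₀j : j₀ < j := by
        rcases Nat.lt_or_ge j₀ j with h | h
        · exact h
        · exact absurd (le_antisymm (hjT.1) h).symm hne
      have : j - 1 ∈ T := ⟨by omega, by
        have : j - 1 + 1 = j := by omega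
        rw [this]; exact hmem⟩
      have := Nat.sInf_le this
      omega
  -- apply the morphism hypothesis
  obtain ⟨hPσ, hPτ, hglb⟩ := hmorph (sigmaP i j hij) (tauP i j hij) (rhoP i j hij)
    (sigmaP_permOn hi hij hjn) (tauP_permOn hi hij hjn) (rhoP_permOn hi hij hjn)
    ⟨weakLe_rho_sigma hij, weakLe_rho_tau hij, fun ρ' _ h1 h2 => rho_glb hij h1 h2⟩
  have hC := hglb (orMap 𝕀 (sigmaP i j hij)) (acycOr_orMap h𝕀 _)
    Relation.ReflTransGen.refl
    (Relation.ReflTransGen.single (flip_sigma_tau h𝕀 hi hij hjn hEj hnot))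
  have hpt := leP_pointwise hC ⟨_, hEj⟩
  rw [orMap_sigmaP h𝕀 hi hij ⟨_, hEj⟩ i (j+1) rfl (by omega)] at hpt
  rw [if_pos (by omega : i ≤ i ∧ i ≤ j ∧ j ≤ j + 1)] at hpt
  have hρE : orMap 𝕀 (rhoP i j hij) ⟨_, hEj⟩ = i := by
    apply orMap_eq_of_first h𝕀 _ _ (by simp only [Finset.mem_Icc]; omega)
    intro h hh
    simp only [Finset.mem_Icc] at hh
    simp only [rhoP_symm, rhoG]
    split_ifs <;> omega
  rw [hρE] at hpt
  omega

end Forward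

/-! #### Greedy linear extensions -/

section Greedy

attribute [local instance] Classical.propDecidable

variable {i j : ℕ}

/-- Available elements: elements of `S` with no one-step predecessor in `S`. -/
noncomputable def avail (𝕀 : Finset (Finset ℕ)) (A : Edge 𝕀 → ℕ) (S : Finset ℕ) : Finset ℕ :=
  S.filter (fun v => ∀ c ∈ S, ¬ stepRel 𝕀 A c v)

/-- A finite set with an acyclic relation has a minimal element. -/
lemma exists_rel_min (r : ℕ → ℕ → Prop) (hirr : ∀ a, ¬ Relation.TransGen r a a) :
    ∀ S : Finset ℕ, S.Nonempty → ∃ v ∈ S, ∀ c ∈ S, ¬ r c v := by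
  intro S
  induction S using Finset.strongInduction with
  | _ S ih =>
    intro hS
    obtain ⟨v₀, hv₀⟩ := hS
    by_cases h : ∀ c ∈ S, ¬ r c v₀
    · exact ⟨v₀, hv₀, h⟩
    · push_neg at h
      obtain ⟨c, hc, hstep⟩ := h
      set S' := S.filter (fun x => Relation.TransGen r x v₀) with hS'
      have hsub : S' ⊂ S := by
        refine Finset.ssubset_iff_of_subset (Finset.filter_subset _ _) |>.mpr ⟨v₀, hv₀, ?_⟩
        intro hmem
        exact hirr v₀ (Finset.mem_filter.mp hmem).2
      have hS'ne : S'.Nonempty :=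
        ⟨c, Finset.mem_filter.mpr ⟨hc, Relation.TransGen.single hstep⟩⟩
      obtain ⟨v, hvS', hvmin⟩ := ih S' hsub hS'ne
      refine ⟨v, (Finset.mem_filter.mp hvS').1, ?_⟩
      intro c' hc' hstep'
      have : c' ∈ S' := Finset.mem_filter.mpr
        ⟨hc', Relation.TransGen.head hstep' (Finset.mem_filter.mp hvS').2⟩
      exact hvmin c' this hstep'

lemma avail_nonempty {A : Edge 𝕀 → ℕ} (hA : IsAcyclic 𝕀 A) {S : Finset ℕ}
    (hS : S.Nonempty) : (avail 𝕀 A S).Nonempty := by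
  obtain ⟨v, hvS, hvmin⟩ := exists_rel_min (stepRel 𝕀 A) (transGen_irrefl_of_acyclic hA) S hS
  exact ⟨v, Finset.mem_filter.mpr ⟨hvS, hvmin⟩⟩

/-- Key step using closedness under initial subintervals. -/
lemma keyStep (h𝕀 : IsIntervalHypergraph n 𝕀)
    (hclosed : ∀ i j k, 1 ≤ i → i < j → j < k → k ≤ n →
      Finset.Icc i k ∈ 𝕀 → Finset.Icc i j ∈ 𝕀)
    {A : Edge 𝕀 → ℕ} (hA : AcycOr 𝕀 A) {σ : Equiv.Perm ℕ}
    (hσpt : ∀ H, A H ≤ orMap 𝕀 σ H)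
    {c a : ℕ} (H : Edge 𝕀) (hAH : A H = c) (haH : a ∈ H.1) (hac : a < c) :
    σ.symm c < σ.symm a := by
  obtain ⟨u, v, hu1, huv, hvn, hH⟩ := edge_interval h𝕀 H
  have hcH : c ∈ H.1 := hAH ▸ hA.1 H
  rw [hH, Finset.mem_Icc] at hcH haH
  have hK : Finset.Icc u c ∈ 𝕀 := by
    rcases eq_or_lt_of_le hcH.2 with hcv | hcv
    · rw [hcv, ← hH]; exact H.2
    · exact hclosed u c v hu1 (by omega) hcv hvn (hH ▸ H.2)
  set K : Edge 𝕀 := ⟨Finset.Icc u c, hK⟩ with hKdef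
  have hAK : A K = c := by
    rw [← hAH]
    apply subedge_eq hA.2 K H
    · rw [hH]; exact Finset.Icc_subset_Icc le_rfl hcH.2
    · rw [hAH]; simp only [hKdef, Finset.mem_Icc]; omega
    · exact hA.1 K
  have h1 : c ≤ orMap 𝕀 σ K := by rw [← hAK]; exact hσpt K
  have h2 : orMap 𝕀 σ K ∈ K.1 := orMap_mem h𝕀 σ K
  rw [show K.1 = Finset.Icc u c from rfl, Finset.mem_Icc] at h2
  have h3 : orMap 𝕀 σ K = c := by omega
  have h4 : σ.symm c ≤ σ.symm a := by
    rw [← h3]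
    exact orMap_first h𝕀 σ K
      (by rw [show K.1 = Finset.Icc u c from rfl, Finset.mem_Icc]; omega)
  rcases lt_or_eq_of_le h4 with h | h
  · exact h
  · exact absurd (σ.symm.injective h) (by omega)

/-- If `x` is below every available element, it has a bigger in-`S` predecessor. -/
lemma bigPred (h𝕀 : IsIntervalHypergraph n 𝕀) {A : Edge 𝕀 → ℕ} (hA : AcycOr 𝕀 A)
    {S : Finset ℕ} {x : ℕ} (hxS : x ∈ S)
    (hex : ∃ c ∈ S, stepRel 𝕀 A c x)
    (havail : ∀ v ∈ avail 𝕀 A S, x < v) :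
    ∃ c ∈ S, x < c ∧ stepRel 𝕀 A c x := by
  set rS := fun a b => a ∈ S ∧ b ∈ S ∧ stepRel 𝕀 A a b with hrS
  have hirrS : ∀ a, ¬ Relation.TransGen rS a a := by
    intro a ha
    exact transGen_irrefl_of_acyclic hA.2 a
      (Relation.TransGen.mono (fun p q hpq => hpq.2.2 : ∀ p q, rS p q → stepRel 𝕀 A p q) a a ha)
  set U := S.filter (fun u => Relation.TransGen rS u x) with hU
  have hUne : U.Nonempty := by
    obtain ⟨c, hcS, hstep⟩ := hex
    exact ⟨c, Finset.mem_filter.mpr ⟨hcS, Relation.TransGen.single ⟨hcS, hxS, hstep⟩⟩⟩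
  obtain ⟨u, huU, humin⟩ := exists_rel_min rS hirrS U hUne
  have huS : u ∈ S := (Finset.mem_filter.mp huU).1
  have huchain : Relation.TransGen rS u x := (Finset.mem_filter.mp huU).2
  have huavail : u ∈ avail 𝕀 A S := by
    refine Finset.mem_filter.mpr ⟨huS, ?_⟩
    intro c hc hstep
    have hcU : c ∈ U := Finset.mem_filter.mpr
      ⟨hc, Relation.TransGen.head ⟨hc, huS, hstep⟩ huchain⟩
    exact humin c hcU ⟨hc, huS, hstep⟩
  have hxu : x < u := havail u huavail
  -- chain descent
  clear huavail humin huU hUne hU huS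
  revert hxu
  induction huchain using Relation.TransGen.head_induction_on with
  | single hstep =>
      intro hxu
      exact ⟨_, hstep.1, hxu, hstep.2.2⟩
  | @head u' z hstep hchain ih =>
      intro hxu
      rcases Nat.lt_or_ge x z with h1 | h1
      · exact ih h1
      · rcases eq_or_lt_of_le h1 with h2 | h2
        · -- z = x : single step u' → x
          exact ⟨u', hstep.1, hxu, h2 ▸ hstep.2.2⟩
        · -- z < x < u' : interval jump
          obtain ⟨H, hAH, hzH, hzne⟩ := hstep.2.2
          have huH : u' ∈ H.1 := hAH ▸ hA.1 H
          have hxH : x ∈ H.1 := edge_between h𝕀 H hzH huH (by omega) (by omega)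
          exact ⟨u', hstep.1, hxu, H, hAH, hxH, by omega⟩

/-- Claim B: elements smaller than the minimal available element come after it in `σ`. -/
lemma claimB (h𝕀 : IsIntervalHypergraph n 𝕀)
    (hclosed : ∀ i j k, 1 ≤ i → i < j → j < k → k ≤ n →
      Finset.Icc i k ∈ 𝕀 → Finset.Icc i j ∈ 𝕀)
    {A : Edge 𝕀 → ℕ} (hA : AcycOr 𝕀 A) {σ : Equiv.Perm ℕ}
    (hσpt : ∀ H, A H ≤ orMap 𝕀 σ H) :
    ∀ (d : ℕ) (S : Finset ℕ) (hav : (avail 𝕀 A S).Nonempty) (a : ℕ), a ∈ S →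
      a < (avail 𝕀 A S).min' hav → (avail 𝕀 A S).min' hav - a ≤ d →
      σ.symm ((avail 𝕀 A S).min' hav) < σ.symm a := by
  intro d
  induction d with
  | zero => intro S hav a _ h1 h2; omega
  | succ d ih =>
    intro S hav a haS hab hd
    set b := (avail 𝕀 A S).min' hav with hb
    have hbavail : b ∈ avail 𝕀 A S := (avail 𝕀 A S).min'_mem hav
    have hanotav : a ∉ avail 𝕀 A S := by
      intro hc
      have := (avail 𝕀 A S).min'_le a hc
      omega
    have hex : ∃ c ∈ S, stepRel 𝕀 A c a := by
      by_contra hc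
      push_neg at hc
      exact hanotav (Finset.mem_filter.mpr ⟨haS, hc⟩)
    have havall : ∀ v ∈ avail 𝕀 A S, a < v := by
      intro v hv
      have := (avail 𝕀 A S).min'_le v hv
      omega
    obtain ⟨c, hcS, hac, H, hAH, haH, hane⟩ := bigPred h𝕀 hA haS hex havall
    rcases lt_trichotomy c b with hcb | hcb | hcb
    · have h1 : σ.symm c < σ.symm a := keyStep h𝕀 hclosed hA hσpt H hAH haH hac
      have h2 : σ.symm b < σ.symm c := ih S hav c hcS hcb (by omega)
      omega
    · rw [← hcb]
      exact keyStep h𝕀 hclosed hA hσpt H hAH haH hac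
    · -- c > b : b would not be available
      exfalso
      have hcH : c ∈ H.1 := hAH ▸ hA.1 H
      have hbH : b ∈ H.1 := edge_between h𝕀 H haH hcH (by omega) (by omega)
      have hstep : stepRel 𝕀 A c b := ⟨H, hAH, hbH, by omega⟩
      exact (Finset.mem_filter.mp hbavail).2 c hcS hstep

/-- Existence of the greedy linear extension with its two key properties. -/
lemma exists_greedy_list (h𝕀 : IsIntervalHypergraph n 𝕀)
    (hclosed : ∀ i j k, 1 ≤ i → i < j → j < k → k ≤ n →
      Finset.Icc i k ∈ 𝕀 → Finset.Icc i j ∈ 𝕀)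
    {A : Edge 𝕀 → ℕ} (hA : AcycOr 𝕀 A) :
    ∀ (S : Finset ℕ), ∃ L : List ℕ, (∀ x, x ∈ L ↔ x ∈ S) ∧ L.Nodup ∧
      (∀ c x, c ∈ L → x ∈ L → stepRel 𝕀 A c x → L.idxOf c < L.idxOf x) ∧
      (∀ σ : Equiv.Perm ℕ, (∀ H, A H ≤ orMap 𝕀 σ H) → ∀ x y, x ∈ L → y ∈ L → x < y →
          L.idxOf y < L.idxOf x → σ.symm y < σ.symm x) := by
  intro S
  induction S using Finset.strongInduction with
  | _ S ih =>
    rcases Finset.eq_empty_or_nonempty S with rfl | hS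
    · exact ⟨[], by simp, List.nodup_nil, by simp, by simp⟩
    · have hav := avail_nonempty hA.2 hS
      set b := (avail 𝕀 A S).min' hav with hbdef
      have hbavail : b ∈ avail 𝕀 A S := (avail 𝕀 A S).min'_mem hav
      have hbS : b ∈ S := (Finset.mem_filter.mp hbavail).1
      obtain ⟨L', hmem', hnd', hN1', hN2'⟩ := ih (S.erase b) (Finset.erase_ssubset hbS)
      refine ⟨b :: L', ?_, ?_, ?_, ?_⟩
      · intro x
        simp only [List.mem_cons, hmem', Finset.mem_erase]
        constructor
        · rintro (rfl | ⟨_, hx⟩)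
          · exact hbS
          · exact hx
        · intro hx
          rcases eq_or_ne x b with rfl | hne
          · exact Or.inl rfl
          · exact Or.inr ⟨hne, hx⟩
      · refine List.nodup_cons.mpr ⟨?_, hnd'⟩
        intro hc
        exact ((Finset.mem_erase.mp ((hmem' b).mp hc)).1) rfl
      · intro c x hcL hxL hstep
        rcases eq_or_ne x b with rfl | hxb
        · -- impossible : b is available
          exfalso
          have hcS : c ∈ S := by
            rcases List.mem_cons.mp hcL with rfl | hc
            · exact hbS
            · exact (Finset.mem_erase.mp ((hmem' c).mp hc)).2
          exact (Finset.mem_filter.mp hbavail).2 c hcS hstep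
        · rcases eq_or_ne c b with rfl | hcb
          · rw [List.idxOf_cons_self]
            rw [List.idxOf_cons_ne _ (Ne.symm hxb)]
            omega
          · rw [List.idxOf_cons_ne _ (Ne.symm hcb), List.idxOf_cons_ne _ (Ne.symm hxb)]
            have hcL' : c ∈ L' := by
              rcases List.mem_cons.mp hcL with rfl | hc
              · exact (hcb rfl).elim
              · exact hc
            have hxL' : x ∈ L' := by
              rcases List.mem_cons.mp hxL with rfl | hx
              · exact (hxb rfl).elim
              · exact hx
            have := hN1' c x hcL' hxL' hstep
            omega
      · intro σ hσpt x y hxL hyL hxy hidx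
        rcases eq_or_ne y b with rfl | hyb
        · have hxb : x ≠ b := by omega
          have hxS : x ∈ S := by
            rcases List.mem_cons.mp hxL with rfl | hx
            · exact (hxb rfl).elim
            · exact (Finset.mem_erase.mp ((hmem' x).mp hx)).2
          exact claimB h𝕀 hclosed hA hσpt b S hav x hxS hxy (by omega)
        · rcases eq_or_ne x b with rfl | hxb
          · rw [List.idxOf_cons_self] at hidx
            omega
          · rw [List.idxOf_cons_ne _ (Ne.symm hxb), List.idxOf_cons_ne _ (Ne.symm hyb)]
              at hidx
            have hxL' : x ∈ L' := by
              rcases List.mem_cons.mp hxL with rfl | hx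
              · exact (hxb rfl).elim
              · exact hx
            have hyL' : y ∈ L' := by
              rcases List.mem_cons.mp hyL with rfl | hy
              · exact (hyb rfl).elim
              · exact hy
            exact hN2' σ hσpt x y hxL' hyL' hxy (by omega)

end Greedy

/-! #### Building a permutation from a list, and the backward direction -/

lemma exists_perm_of_list (hn : 1 ≤ n) (L : List ℕ)
    (hmem : ∀ x, x ∈ L ↔ x ∈ Finset.Icc 1 n) (hnd : L.Nodup) :
    ∃ π : Equiv.Perm ℕ, IsPermOn n π ∧
      ∀ x ∈ Finset.Icc 1 n, π.symm x = L.idxOf x + 1 := by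
  have hlen : L.length = n := by
    have h1 : L.toFinset = Finset.Icc 1 n := by
      ext x
      rw [List.mem_toFinset]
      exact hmem x
    have h2 := List.toFinset_card_of_nodup hnd
    rw [h1] at h2
    simp at h2
    omega
  set f : ℕ → ℕ := fun p => if 1 ≤ p ∧ p ≤ n then L.getD (p-1) 0 else p with hf
  set g : ℕ → ℕ := fun x => if 1 ≤ x ∧ x ≤ n then L.idxOf x + 1 else x with hg
  have hmemIcc : ∀ x, x ∈ L → 1 ≤ x ∧ x ≤ n := by
    intro x hx
    have := (hmem x).mp hx
    simpa using this
  have hfg : ∀ p, g (f p) = p := by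
    intro p
    by_cases hp : 1 ≤ p ∧ p ≤ n
    · have hplt : p - 1 < L.length := by omega
      have hfp : f p = L[p-1] := by
        simp only [hf, if_pos hp]
        exact List.getD_eq_getElem L 0 hplt
      have hvL : L[p-1] ∈ L := List.getElem_mem hplt
      have hidx : L.idxOf (L[p-1]) = p - 1 := List.Nodup.idxOf_getElem hnd (p-1) hplt
      rw [hfp]
      simp only [hg, if_pos (hmemIcc _ hvL), hidx]
      omega
    · simp only [hf, hg, if_neg hp]
  have hgf : ∀ x, f (g x) = x := by
    intro x
    by_cases hx : 1 ≤ x ∧ x ≤ n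
    · have hxL : x ∈ L := (hmem x).mpr (by simpa using hx)
      have hlt : L.idxOf x < L.length := List.idxOf_lt_length_iff.mpr hxL
      simp only [hg, if_pos hx, hf]
      rw [if_pos (by omega : 1 ≤ L.idxOf x + 1 ∧ L.idxOf x + 1 ≤ n)]
      have : L.idxOf x + 1 - 1 = L.idxOf x := by omega
      rw [this, List.getD_eq_getElem L 0 hlt]
      exact List.getElem_idxOf hlt
    · simp only [hg, hf, if_neg hx]
  refine ⟨⟨f, g, hfg, hgf⟩, ?_, ?_⟩
  · intro x hx
    simp only [Finset.mem_Icc, not_and_or, not_le] at hx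
    show f x = x
    simp only [hf]
    rw [if_neg (by omega)]
  · intro x hx
    simp only [Finset.mem_Icc] at hx
    show g x = L.idxOf x + 1
    simp only [hg]
    rw [if_pos hx]

/-- The backward direction of the main theorem. -/
lemma backward_dir (hn : 1 ≤ n) (h𝕀 : IsIntervalHypergraph n 𝕀)
    (hclosed : ∀ i j k, 1 ≤ i → i < j → j < k → k ≤ n →
      Finset.Icc i k ∈ 𝕀 → Finset.Icc i j ∈ 𝕀) :
    ∀ σ τ ρ : Equiv.Perm ℕ, IsPermOn n σ → IsPermOn n τ → IsPermOn n ρ →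
      (weakLe n ρ σ ∧ weakLe n ρ τ ∧
        ∀ ρ', IsPermOn n ρ' → weakLe n ρ' σ → weakLe n ρ' τ → weakLe n ρ' ρ) →
      (leP n 𝕀 (orMap 𝕀 ρ) (orMap 𝕀 σ) ∧ leP n 𝕀 (orMap 𝕀 ρ) (orMap 𝕀 τ) ∧
        ∀ C, AcycOr 𝕀 C → leP n 𝕀 C (orMap 𝕀 σ) → leP n 𝕀 C (orMap 𝕀 τ) →
          leP n 𝕀 C (orMap 𝕀 ρ)) := by
  intro σ τ ρ hσp hτp hρp ⟨h1, h2, hglb⟩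
  refine ⟨weakLe_leP h𝕀 hρp hσp h1, weakLe_leP h𝕀 hρp hτp h2, ?_⟩
  intro C hC hCσ hCτ
  have hptσ : ∀ H, C H ≤ orMap 𝕀 σ H := leP_pointwise hCσ
  have hptτ : ∀ H, C H ≤ orMap 𝕀 τ H := leP_pointwise hCτ
  obtain ⟨L, hmem, hnd, hN1, hN2⟩ := exists_greedy_list h𝕀 hclosed hC (Finset.Icc 1 n)
  obtain ⟨π, hπp, hπidx⟩ := exists_perm_of_list hn L hmem hnd
  -- Or_π = C
  have hOr : orMap 𝕀 π = C := by
    funext H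
    apply orMap_eq_of_first h𝕀 π H (hC.1 H)
    intro h hh
    have hCIcc : C H ∈ Finset.Icc 1 n := edge_subset h𝕀 H (hC.1 H)
    have hhIcc : h ∈ Finset.Icc 1 n := edge_subset h𝕀 H hh
    rcases eq_or_ne h (C H) with rfl | hne
    · exact le_refl _
    · have hstep : stepRel 𝕀 C (C H) h := ⟨H, rfl, hh, hne⟩
      have hidx := hN1 (C H) h ((hmem _).mpr hCIcc) ((hmem _).mpr hhIcc) hstep
      rw [hπidx _ hCIcc, hπidx _ hhIcc]
      omega
  -- Inv π ⊆ Inv σ and τ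
  have hwσ : weakLe n π σ := by
    intro a b ha hab hbn hinv
    have haIcc : a ∈ Finset.Icc 1 n := by simp only [Finset.mem_Icc]; omega
    have hbIcc : b ∈ Finset.Icc 1 n := by simp only [Finset.mem_Icc]; omega
    rw [hπidx _ haIcc, hπidx _ hbIcc] at hinv
    exact hN2 σ hptσ a b ((hmem _).mpr haIcc) ((hmem _).mpr hbIcc) hab (by omega)
  have hwτ : weakLe n π τ := by
    intro a b ha hab hbn hinv
    have haIcc : a ∈ Finset.Icc 1 n := by simp only [Finset.mem_Icc]; omega
    have hbIcc : b ∈ Finset.Icc 1 n := by simp only [Finset.mem_Icc]; omega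
    rw [hπidx _ haIcc, hπidx _ hbIcc] at hinv
    exact hN2 τ hptτ a b ((hmem _).mpr haIcc) ((hmem _).mpr hbIcc) hab (by omega)
  have hwρ := hglb π hπp hwσ hwτ
  have hfin := weakLe_leP h𝕀 hπp hρp hwρ
  rwa [hOr] at hfin

end Aux

/-- For an interval hypergraph `𝕀` on `[n]`, the map `π ↦ Or_π` is a
meet semilattice morphism from the weak order to `P_𝕀` (greatest lower bounds are sent
to greatest lower bounds) if and only if `𝕀` is closed under initial subintervals. -/
theorem stmt3 (n : ℕ) (hn : 1 ≤ n) (𝕀 : Finset (Finset ℕ))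
    (h𝕀 : IsIntervalHypergraph n 𝕀) :
    (∀ σ τ ρ : Equiv.Perm ℕ, IsPermOn n σ → IsPermOn n τ → IsPermOn n ρ →
      (weakLe n ρ σ ∧ weakLe n ρ τ ∧
        ∀ ρ', IsPermOn n ρ' → weakLe n ρ' σ → weakLe n ρ' τ → weakLe n ρ' ρ) →
      (leP n 𝕀 (orMap 𝕀 ρ) (orMap 𝕀 σ) ∧ leP n 𝕀 (orMap 𝕀 ρ) (orMap 𝕀 τ) ∧
        ∀ C, AcycOr 𝕀 C → leP n 𝕀 C (orMap 𝕀 σ) → leP n 𝕀 C (orMap 𝕀 τ) →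
          leP n 𝕀 C (orMap 𝕀 ρ))) ↔
    (∀ i j k, 1 ≤ i → i < j → j < k → k ≤ n →
      Finset.Icc i k ∈ 𝕀 → Finset.Icc i j ∈ 𝕀) := by
  constructor
  · intro hmorph
    exact forward_dir h𝕀 hmorph
  · intro hclosed
    exact backward_dir hn h𝕀 hclosed
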